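/- For positive even k, the denominator of the Bernoulli number B_k (in lowest terms) is the product of all primes p such that (p−1) divides k. -/

import Mathlib

open Finset

variable {p : ℕ} [hp : Fact p.Prime]

-- norm of nat not divisible by p is 1
lemma norm_nat_one {m : ℕ} (h : ¬ p ∣ m) : ‖(m : ℚ_[p])‖ = 1 := by
  have h1 : ‖((m : ℤ) : ℚ_[p])‖ ≤ 1 := Padic.norm_int_le_one _
  have h2 : ¬ ‖((m : ℤ) : ℚ_[p])‖ < 1 := by
    rw [Padic.norm_intCast_lt_one_iff]
    exact_mod_cast h
  push_cast at h1 h2 ⊢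
  linarith [lt_or_ge (‖(m : ℚ_[p])‖) 1]

-- norm of nat i: ‖i‖ = p^{-v}
lemma norm_nat_eq {i : ℕ} (hi : i ≠ 0) :
    ‖(i : ℚ_[p])‖ = ((p : ℝ))⁻¹ ^ (padicValNat p i) := by
  conv_lhs => rw [← Nat.ordProj_mul_ordCompl_eq_self i p]
  push_cast
  rw [norm_mul, norm_pow, norm_nat_one (Nat.not_dvd_ordCompl hp.out hi), mul_one,
    Padic.norm_p, Nat.factorization_def _ hp.out]

-- ultrametric sum bound
lemma norm_sum_le' {α : Type*} (s : Finset α) (f : α → ℚ_[p]) {C : ℝ} (hC : 0 ≤ C)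
    (h : ∀ i ∈ s, ‖f i‖ ≤ C) : ‖∑ i ∈ s, f i‖ ≤ C := by
  induction s using Finset.cons_induction with
  | empty => simpa using hC
  | cons a s ha ih =>
    rw [Finset.sum_cons]
    refine le_trans (Padic.nonarchimedean _ _) (max_le (h a (by simp)) ?_)
    exact ih fun i hi => h i (Finset.mem_cons.2 (Or.inr hi))


lemma aux_pow3 : ∀ v : ℕ, 1 ≤ v → v + 2 ≤ 3 ^ v := by
  intro v
  induction v with
  | zero => omega
  | succ n ih =>
    intro _
    rcases Nat.eq_zero_or_pos n with rfl | hn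
    · norm_num
    · have := ih hn
      have : 3 ^ n ≥ 1 := Nat.one_le_pow _ _ (by norm_num)
      calc n + 1 + 2 ≤ 3 ^ n + 1 := by omega
        _ ≤ 3 ^ (n+1) := by rw [pow_succ]; omega

-- arithmetic: for odd i ≥ 3, padicValNat p i ≤ i - 2
lemma val_le_sub_two {i : ℕ} (hodd : Odd i) (h3 : 3 ≤ i) : padicValNat p i ≤ i - 2 := by
  have hv : p ^ padicValNat p i ∣ i := by
    rw [← Nat.factorization_def _ hp.out]; exact Nat.ordProj_dvd i p
  set v := padicValNat p i
  rcases Nat.eq_zero_or_pos v with h0 | hpos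
  · omega
  have hpi : p ∣ i := (dvd_pow_self p hpos.ne').trans hv
  have hp2 : p ≠ 2 := by
    rintro rfl
    have := Nat.odd_iff.mp hodd
    omega
  have hp3 : 3 ≤ p := by have := hp.out.two_le; omega
  have h1 : 3 ^ v ≤ i := le_trans (Nat.pow_le_pow_left hp3 v) (Nat.le_of_dvd (by omega) hv)
  have h2 := aux_pow3 v hpos
  omega

-- nat choose identity
lemma choose_id {k j : ℕ} (hj : j ≤ k) :
    (k+1).choose j * (k+1-j) = (k+1) * k.choose j := by
  have h := Nat.add_one_mul_choose_eq k (k - j)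
  rw [Nat.choose_symm hj] at h
  have h2 : (k+1).choose (k - j + 1) = (k+1).choose j := by
    rw [← Nat.choose_symm (by omega : k - j + 1 ≤ k + 1)]
    congr 1
    omega
  rw [h2] at h
  rw [(by omega : k + 1 - j = k - j + 1)]
  simpa [Nat.succ_eq_add_one] using h.symm

variable {p : ℕ} [hp : Fact p.Prime]

lemma norm_two_inv_le : ‖(2 : ℚ_[p])‖⁻¹ ≤ (p:ℝ) := by
  by_cases h2 : p = 2
  · subst h2
    have h := @Padic.norm_p 2 _
    have h' : ‖(2 : ℚ_[2])‖ = (2:ℝ)⁻¹ := by simpa using h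
    rw [h']
    norm_num
  · have hnd : ¬ p ∣ 2 := fun h =>
      h2 ((Nat.prime_dvd_prime_iff_eq hp.out Nat.prime_two).mp h)
    rw [show (2 : ℚ_[p]) = ((2:ℕ) : ℚ_[p]) by norm_num, norm_nat_one hnd]
    norm_num
    exact_mod_cast hp.out.one_lt.le

lemma term_bound {k j : ℕ} (hke : Even k) (hk2 : 2 ≤ k) (hj : j < k)
    (hB : ‖((bernoulli j : ℚ) : ℚ_[p])‖ ≤ p) :
    ‖((bernoulli j * ((k+1).choose j : ℚ) * (p:ℚ)^(k+1-j) / ((k:ℚ)+1) : ℚ) : ℚ_[p])‖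
      ≤ (p : ℝ)⁻¹ := by
  have hp1 : (1:ℝ) < p := by exact_mod_cast hp.out.one_lt
  have hp0 : (0:ℝ) < p := by linarith
  have hne : (p:ℝ) ≠ 0 := hp0.ne'
  have hpinv : (0:ℝ) < (p:ℝ)⁻¹ := by positivity
  set i := k + 1 - j with hi
  have hi2 : 2 ≤ i := by omega
  -- rewrite the term
  have hexpr : (bernoulli j * ((k+1).choose j : ℚ) * (p:ℚ)^(k+1-j) / ((k:ℚ)+1) : ℚ)
      = bernoulli j * (k.choose j : ℚ) * (p:ℚ)^i / (i:ℚ) := by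
    have hid := choose_id (le_of_lt hj)
    have hca : (((k+1).choose j : ℚ)) * ((i:ℚ)) = ((k:ℚ)+1) * (k.choose j : ℚ) := by
      exact_mod_cast congrArg (Nat.cast : ℕ → ℚ) hid
    have h1 : ((k:ℚ)+1) ≠ 0 := by positivity
    have h2 : (i:ℚ) ≠ 0 := by exact_mod_cast (by omega : i ≠ 0)
    field_simp
    linear_combination bernoulli j * (p:ℚ)^i * hca
  rw [hexpr]
  rcases Nat.even_or_odd j with hje | hjo
  · -- j even: i odd ≥ 3
    have hjk : j ≤ k - 2 := by
      rcases hke with ⟨a, ha⟩; rcases hje with ⟨b, hb⟩; omega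
    have hi3 : 3 ≤ i := by omega
    have hiodd : Odd i := by
      rcases hke with ⟨a, ha⟩; rcases hje with ⟨b, hb⟩
      exact ⟨a - b, by omega⟩
    push_cast
    rw [norm_div, norm_mul, norm_mul, norm_pow, Padic.norm_p]
    rw [norm_nat_eq (by omega : i ≠ 0)]
    set v := padicValNat p i with hv
    have hvle : v ≤ i - 2 := val_le_sub_two hiodd hi3
    have hC : ‖((k.choose j : ℕ) : ℚ_[p])‖ ≤ 1 := by
      exact_mod_cast Padic.norm_int_le_one ((k.choose j : ℤ))
    have key : (p:ℝ) * 1 * ((p:ℝ)⁻¹)^i / ((p:ℝ)⁻¹)^v ≤ (p:ℝ)⁻¹ := by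
      have e1 : (p:ℝ) * 1 * ((p:ℝ)⁻¹)^i / ((p:ℝ)⁻¹)^v = (p:ℝ)^((1:ℤ) + (-(i:ℤ)) + (v:ℤ)) := by
        rw [zpow_add₀ hne, zpow_add₀ hne, zpow_one, zpow_neg, zpow_natCast, zpow_natCast,
          inv_pow]
        field_simp
        rw [one_div, inv_pow, inv_mul_cancel₀ (pow_ne_zero _ hne)]
      rw [e1, ← zpow_neg_one]
      exact zpow_le_zpow_right₀ hp1.le (by omega)
    calc ‖((bernoulli j : ℚ) : ℚ_[p])‖ * ‖((k.choose j : ℕ) : ℚ_[p])‖ * ((p:ℝ)⁻¹)^i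
          / ((p:ℝ)⁻¹)^v
        ≤ (p:ℝ) * 1 * ((p:ℝ)⁻¹)^i / ((p:ℝ)⁻¹)^v := by
          gcongr
      _ ≤ (p:ℝ)⁻¹ := key
  · rcases eq_or_ne j 1 with rfl | hj1
    · -- j = 1
      have hik : i = k := by omega
      have hkQ : ((k:ℚ)) ≠ 0 := by exact_mod_cast (by omega : k ≠ 0)
      have hr : (bernoulli 1 * ((k.choose 1 : ℕ) : ℚ) * (p:ℚ)^i / (i:ℚ) : ℚ)
          = -((p:ℚ)^k / 2) := by
        rw [bernoulli_one, hik, Nat.choose_one_right]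
        field_simp
      rw [hr]
      push_cast
      rw [norm_neg, norm_div, norm_pow, Padic.norm_p]
      have h2n : (0:ℝ) < ‖(2 : ℚ_[p])‖ := by
        rw [norm_pos_iff]; norm_num
      calc ((p:ℝ)⁻¹)^k / ‖(2 : ℚ_[p])‖ = ((p:ℝ)⁻¹)^k * ‖(2 : ℚ_[p])‖⁻¹ := div_eq_mul_inv _ _
        _ ≤ ((p:ℝ)⁻¹)^2 * (p:ℝ) := by
            apply mul_le_mul _ norm_two_inv_le (by positivity) (by positivity)
            apply pow_le_pow_of_le_one (by positivity) _ hk2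
            rw [inv_le_one_iff₀]; right; linarith
        _ = (p:ℝ)⁻¹ := by field_simp
    · -- j odd ≥ 3 : bernoulli j = 0
      have hb0 : bernoulli j = 0 := by
        rw [bernoulli_eq_bernoulli'_of_ne_one hj1]
        obtain ⟨m, hm⟩ := hjo
        exact bernoulli'_eq_zero_of_odd ⟨m, hm⟩ (by omega)
      simp only [hb0, zero_mul, zero_div, Rat.cast_zero, norm_zero]
      positivity

lemma norm_nat_le_one (m : ℕ) : ‖(m : ℚ_[p])‖ ≤ 1 := by
  exact_mod_cast Padic.norm_int_le_one (m : ℤ)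

lemma faulhaber_split {k : ℕ} (hk : 1 ≤ k) (n : ℕ) :
    (∑ i ∈ range n, (i:ℚ)^k)
      = bernoulli k * n
        + ∑ j ∈ range k, bernoulli j * ((k+1).choose j : ℚ) * (n:ℚ)^(k+1-j) / ((k:ℚ)+1) := by
  have h := sum_range_pow n k
  rw [Finset.sum_range_succ] at h
  rw [h, Nat.choose_succ_self_right] at *
  have h1 : k + 1 - k = 1 := by omega
  rw [h1]
  have h2 : ((k:ℚ)+1) ≠ 0 := by positivity
  push_cast
  field_simp
  ring

lemma key_estimate {k : ℕ} (hke : Even k) (hk2 : 2 ≤ k)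
    (hB : ∀ j, j < k → ‖((bernoulli j : ℚ) : ℚ_[p])‖ ≤ p) :
    ‖((bernoulli k : ℚ) : ℚ_[p]) * p - ((∑ i ∈ range p, (i:ℚ)^k : ℚ) : ℚ_[p])‖
      ≤ (p:ℝ)⁻¹ := by
  have hp0 : (0:ℝ) < p := by exact_mod_cast hp.out.pos
  have h := faulhaber_split (by omega : 1 ≤ k) p
  have hcast : ((bernoulli k : ℚ) : ℚ_[p]) * p - ((∑ i ∈ range p, (i:ℚ)^k : ℚ) : ℚ_[p])
      = -∑ j ∈ range k,
          ((bernoulli j * ((k+1).choose j : ℚ) * (p:ℚ)^(k+1-j) / ((k:ℚ)+1) : ℚ) : ℚ_[p]) := by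
    rw [show ((∑ i ∈ range p, (i:ℚ)^k : ℚ) : ℚ_[p])
        = ((bernoulli k * (p:ℚ) + ∑ j ∈ range k,
            bernoulli j * ((k+1).choose j : ℚ) * (p:ℚ)^(k+1-j) / ((k:ℚ)+1) : ℚ) : ℚ_[p]) by
      exact_mod_cast congrArg (fun q : ℚ => (q : ℚ_[p])) h]
    push_cast
    ring
  rw [hcast, norm_neg]
  exact norm_sum_le' _ _ (by positivity)
    (fun j hj => term_bound hke hk2 (Finset.mem_range.mp hj) (hB j (Finset.mem_range.mp hj)))

lemma bernoulli_norm_le (k : ℕ) : ‖((bernoulli k : ℚ) : ℚ_[p])‖ ≤ p := by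
  have hp1 : (1:ℝ) < p := by exact_mod_cast hp.out.one_lt
  induction k using Nat.strong_induction_on with
  | _ k ih =>
    rcases Nat.lt_or_ge k 2 with hk | hk2
    · interval_cases k
      · simp [bernoulli_zero]
        exact hp.out.one_lt.le
      · rw [bernoulli_one]
        push_cast
        rw [neg_div, norm_neg, norm_div, norm_one]
        calc 1 / ‖(2:ℚ_[p])‖ = ‖(2:ℚ_[p])‖⁻¹ := one_div _
          _ ≤ (p:ℝ) := norm_two_inv_le
    · rcases Nat.even_or_odd k with hke | hko
      · have hkey := key_estimate hke hk2 (fun j hj => ih j hj)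
        have hS : ‖((∑ i ∈ range p, (i:ℚ)^k : ℚ) : ℚ_[p])‖ ≤ 1 := by
          rw [show ((∑ i ∈ range p, (i:ℚ)^k : ℚ) : ℚ_[p]) = ∑ i ∈ range p, (i:ℚ_[p])^k by
            push_cast; rfl]
          exact norm_sum_le' _ _ zero_le_one
            (fun i _ => by rw [norm_pow]; exact pow_le_one₀ (norm_nonneg _) (norm_nat_le_one i))
        have htri : ‖((bernoulli k : ℚ) : ℚ_[p]) * p‖ ≤ 1 := by
          have := Padic.nonarchimedean
            (((bernoulli k : ℚ) : ℚ_[p]) * (p:ℚ_[p]) - ((∑ i ∈ range p, (i:ℚ)^k : ℚ) : ℚ_[p]))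
            ((∑ i ∈ range p, (i:ℚ)^k : ℚ) : ℚ_[p])
          rw [sub_add_cancel] at this
          refine le_trans this (max_le (le_trans hkey ?_) hS)
          rw [inv_le_one_iff₀]; right; linarith
        rw [norm_mul, Padic.norm_p] at htri
        calc ‖((bernoulli k : ℚ) : ℚ_[p])‖
            = ‖((bernoulli k : ℚ) : ℚ_[p])‖ * (p:ℝ)⁻¹ * p := by field_simp
          _ ≤ 1 * p := by
              apply mul_le_mul_of_nonneg_right htri (by positivity)
          _ = p := one_mul _
      · have hb0 : bernoulli k = 0 := by
          rw [bernoulli_eq_bernoulli'_of_ne_one (by omega)]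
          obtain ⟨m, hm⟩ := hko
          exact bernoulli'_eq_zero_of_odd ⟨m, hm⟩ (by omega)
        rw [hb0]
        push_cast
        rw [norm_zero]
        linarith



lemma sum_pow_mod {k : ℕ} (hk : 1 ≤ k) :
    ((∑ i ∈ range p, (i:ℤ)^k : ℤ) : ZMod p) = if (p-1) ∣ k then -1 else 0 := by
  haveI : NeZero p := ⟨hp.out.ne_zero⟩
  push_cast
  have h1 : ∑ i ∈ range p, ((i : ZMod p))^k = ∑ x : ZMod p, x^k := by
    refine Finset.sum_nbij' (fun i : ℕ => (i : ZMod p)) (fun x : ZMod p => x.val)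
      (fun a _ => Finset.mem_univ _) (fun a _ => Finset.mem_range.mpr (ZMod.val_lt a))
      (fun a ha => ZMod.val_cast_of_lt (Finset.mem_range.mp ha))
      (fun a _ => ZMod.natCast_rightInverse a) (fun a _ => rfl)
  rw [h1]
  classical
  have h0 : (0:ZMod p)^k = 0 := zero_pow (by omega)
  let φ : (ZMod p)ˣ ↪ ZMod p := ⟨fun x => x, fun a b h => Units.ext h⟩
  have hmap : univ.map φ = univ \ {0} := by
    ext x
    simp only [Finset.mem_map, mem_univ, Function.Embedding.coeFn_mk, true_and,
      Finset.mem_sdiff, Finset.mem_singleton, φ]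
    exact isUnit_iff_ne_zero
  have h2 : ∑ x : ZMod p, x^k = ∑ x : (ZMod p)ˣ, ((x:ZMod p))^k := by
    calc ∑ x : ZMod p, x^k = ∑ x ∈ univ \ {(0:ZMod p)}, x^k := by
          rw [← Finset.sum_sdiff (Finset.subset_univ {(0:ZMod p)}), Finset.sum_singleton, h0,
            add_zero]
      _ = ∑ x : (ZMod p)ˣ, ((x:ZMod p))^k := by rw [← hmap, Finset.sum_map]; rfl
  rw [h2, FiniteField.sum_pow_units, ZMod.card]



lemma norm_nat_one' {m : ℕ} (h : ¬ p ∣ m) : ‖(m : ℚ_[p])‖ = 1 := by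
  have h1 : ‖((m : ℤ) : ℚ_[p])‖ ≤ 1 := Padic.norm_int_le_one _
  have h2 : ¬ ‖((m : ℤ) : ℚ_[p])‖ < 1 := by
    rw [Padic.norm_intCast_lt_one_iff]
    exact_mod_cast h
  push_cast at h1 h2 ⊢
  linarith [lt_or_ge (‖(m : ℚ_[p])‖) 1]

lemma norm_int_one {z : ℤ} (h : ¬ (p:ℤ) ∣ z) : ‖(z : ℚ_[p])‖ = 1 := by
  have h1 : ‖(z : ℚ_[p])‖ ≤ 1 := Padic.norm_int_le_one _
  have h2 : ¬ ‖(z : ℚ_[p])‖ < 1 := by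
    rw [Padic.norm_intCast_lt_one_iff]
    exact h
  linarith [lt_or_ge (‖(z : ℚ_[p])‖) 1]

lemma norm_nat_eq' {i : ℕ} (hi : i ≠ 0) :
    ‖(i : ℚ_[p])‖ = ((p : ℝ))⁻¹ ^ (padicValNat p i) := by
  conv_lhs => rw [← Nat.ordProj_mul_ordCompl_eq_self i p]
  push_cast
  rw [norm_mul, norm_pow, norm_nat_one' (Nat.not_dvd_ordCompl hp.out hi), mul_one,
    Padic.norm_p, Nat.factorization_def _ hp.out]

lemma num_not_dvd {q : ℚ} (h : p ∣ q.den) : ¬ (p:ℤ) ∣ q.num := by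
  intro hnum
  have hcop := q.reduced
  have h1 : p ∣ q.num.natAbs := Int.natCast_dvd_natCast.mp (Int.dvd_natAbs.mpr hnum)
  exact hp.out.one_lt.ne' (Nat.eq_one_of_dvd_coprimes hcop h1 h)

lemma cast_eq_num_div_den (q : ℚ) : (q : ℚ_[p]) = (q.num : ℚ_[p]) / (q.den : ℚ_[p]) := by
  rw [Rat.cast_def]

lemma den_not_dvd {q : ℚ} (h : ‖(q:ℚ_[p])‖ ≤ 1) : ¬ p ∣ q.den := by
  intro hdvd
  have hp1 : (1:ℝ) < p := by exact_mod_cast hp.out.one_lt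
  have hden0 : q.den ≠ 0 := q.den_nz
  have hnum : ‖((q.num : ℤ) : ℚ_[p])‖ = 1 := norm_int_one (num_not_dvd hdvd)
  have hv : 1 ≤ padicValNat p q.den :=
    one_le_padicValNat_of_dvd hden0 hdvd
  have hdenn : ‖((q.den : ℕ) : ℚ_[p])‖ = ((p:ℝ)⁻¹) ^ padicValNat p q.den :=
    norm_nat_eq' hden0
  have hlt : ‖((q.den : ℕ) : ℚ_[p])‖ < 1 := by
    rw [hdenn]
    calc ((p:ℝ)⁻¹) ^ padicValNat p q.den ≤ ((p:ℝ)⁻¹) ^ 1 := by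
          apply pow_le_pow_of_le_one (by positivity) (by
            rw [inv_le_one_iff₀]; right; linarith) hv
      _ < 1 := by rw [pow_one, inv_lt_one_iff₀]; right; linarith
  have hpos : 0 < ‖((q.den : ℕ) : ℚ_[p])‖ := by
    rw [norm_pos_iff]
    exact_mod_cast hden0
  rw [cast_eq_num_div_den, norm_div] at h
  rw [div_le_one hpos] at h
  rw [hnum] at h
  linarith

lemma den_val_one {q : ℚ} (h : ‖(q:ℚ_[p])‖ = p) : padicValNat p q.den = 1 := by
  have hp1 : (1:ℝ) < p := by exact_mod_cast hp.out.one_lt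
  have hden0 : q.den ≠ 0 := q.den_nz
  have hdenn : ‖((q.den : ℕ) : ℚ_[p])‖ = ((p:ℝ)⁻¹) ^ padicValNat p q.den :=
    norm_nat_eq' hden0
  have hdpos : 0 < ‖((q.den : ℕ) : ℚ_[p])‖ := by
    rw [norm_pos_iff]; exact_mod_cast hden0
  rw [cast_eq_num_div_den, norm_div, hdenn] at h
  set v := padicValNat p q.den with hv
  -- ‖num‖ = p * (p⁻¹)^v
  have hnum : ‖((q.num : ℤ) : ℚ_[p])‖ = (p:ℝ) * ((p:ℝ)⁻¹)^v := by
    rw [div_eq_iff (by positivity)] at h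
    rw [h]
  have hnle : ‖((q.num : ℤ) : ℚ_[p])‖ ≤ 1 := Padic.norm_int_le_one _
  rcases Nat.lt_or_ge v 1 with h0 | h1
  · exfalso
    interval_cases v
    simp at hnum
    rw [hnum] at hnle
    linarith
  · have hdvd : p ∣ q.den := dvd_of_one_le_padicValNat h1
    have hnum1 : ‖((q.num : ℤ) : ℚ_[p])‖ = 1 := norm_int_one (num_not_dvd hdvd)
    rw [hnum1] at hnum
    -- 1 = p * (p⁻¹)^v, so v = 1
    rcases Nat.lt_or_ge v 2 with h2 | h2
    · omega
    · exfalso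
      have : (p:ℝ) * ((p:ℝ)⁻¹)^v < 1 := by
        calc (p:ℝ) * ((p:ℝ)⁻¹)^v ≤ (p:ℝ) * ((p:ℝ)⁻¹)^2 := by
              apply mul_le_mul_of_nonneg_left _ (by positivity)
              apply pow_le_pow_of_le_one (by positivity)
                (by rw [inv_le_one_iff₀]; right; linarith) h2
          _ = (p:ℝ)⁻¹ := by field_simp
          _ < 1 := by rw [inv_lt_one_iff₀]; right; linarith
      linarith [hnum.symm.le]

lemma den_val_eq {k : ℕ} (hke : Even k) (hk2 : 2 ≤ k) :
    padicValNat p (bernoulli k).den = if (p-1) ∣ k then 1 else 0 := by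
  have hp1 : (1:ℝ) < p := by exact_mod_cast hp.out.one_lt
  have hp0 : (0:ℝ) < p := by linarith
  have hkey := key_estimate (p := p) hke hk2 (fun j _ => bernoulli_norm_le j)
  set s : ℤ := ∑ i ∈ range p, (i:ℤ)^k with hs
  have hscast : ((∑ i ∈ range p, (i:ℚ)^k : ℚ) : ℚ_[p]) = ((s:ℤ) : ℚ_[p]) := by
    rw [hs]
    push_cast
    rfl
  rw [hscast] at hkey
  have hmod := sum_pow_mod (p := p) (by omega : 1 ≤ k)
  rw [← hs] at hmod
  by_cases hdvd : (p-1) ∣ k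
  · rw [if_pos hdvd]
    rw [if_pos hdvd] at hmod
    -- ‖s‖ = 1
    have hsnz : ¬ (p:ℤ) ∣ s := by
      rw [← ZMod.intCast_zmod_eq_zero_iff_dvd, hmod]
      intro hcontra
      have : (1 : ZMod p) = 0 := by linear_combination -hcontra
      exact one_ne_zero this
    have hsnorm : ‖((s:ℤ) : ℚ_[p])‖ = 1 := norm_int_one hsnz
    -- ‖B*p‖ = 1
    have hle : ‖((bernoulli k : ℚ) : ℚ_[p]) * (p:ℚ_[p])‖ ≤ 1 := by
      have := Padic.nonarchimedean
        (((bernoulli k : ℚ) : ℚ_[p]) * (p:ℚ_[p]) - ((s:ℤ) : ℚ_[p])) ((s:ℤ) : ℚ_[p])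
      rw [sub_add_cancel] at this
      refine le_trans this (max_le (le_trans hkey ?_) hsnorm.le)
      rw [inv_le_one_iff₀]; right; linarith
    have hge : 1 ≤ ‖((bernoulli k : ℚ) : ℚ_[p]) * (p:ℚ_[p])‖ := by
      by_contra hcon
      push_neg at hcon
      have h2 := Padic.nonarchimedean
        (((s:ℤ) : ℚ_[p]) - ((bernoulli k : ℚ) : ℚ_[p]) * (p:ℚ_[p]))
        (((bernoulli k : ℚ) : ℚ_[p]) * (p:ℚ_[p]))
      rw [sub_add_cancel, hsnorm] at h2
      rw [← norm_neg] at hkey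
      have hneg : -(((bernoulli k : ℚ) : ℚ_[p]) * (p:ℚ_[p]) - ((s:ℤ) : ℚ_[p]))
          = ((s:ℤ) : ℚ_[p]) - ((bernoulli k : ℚ) : ℚ_[p]) * (p:ℚ_[p]) := by ring
      rw [hneg] at hkey
      have : (1:ℝ) ≤ max ((p:ℝ)⁻¹) ‖((bernoulli k : ℚ) : ℚ_[p]) * (p:ℚ_[p])‖ :=
        le_trans h2 (max_le_max hkey le_rfl)
      rcases max_cases ((p:ℝ)⁻¹) ‖((bernoulli k : ℚ) : ℚ_[p]) * (p:ℚ_[p])‖ with ⟨he, _⟩ | ⟨he, _⟩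
      · rw [he] at this
        rw [← not_lt] at this
        exact this (by rw [inv_lt_one_iff₀]; right; linarith)
      · rw [he] at this
        linarith
    have heq : ‖((bernoulli k : ℚ) : ℚ_[p]) * (p:ℚ_[p])‖ = 1 := le_antisymm hle hge
    have hBnorm : ‖((bernoulli k : ℚ) : ℚ_[p])‖ = p := by
      rw [norm_mul, Padic.norm_p] at heq
      have h9 : ‖((bernoulli k : ℚ) : ℚ_[p])‖ * ((p:ℝ)⁻¹ * (p:ℝ)) = 1 * p := by
        rw [← mul_assoc, heq]
      rw [inv_mul_cancel₀ (by positivity), mul_one, one_mul] at h9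
      exact h9
    exact den_val_one hBnorm
  · rw [if_neg hdvd]
    rw [if_neg hdvd] at hmod
    have hdvds : (p:ℤ) ∣ s := by
      rw [← ZMod.intCast_zmod_eq_zero_iff_dvd, hmod]
    have hsnorm : ‖((s:ℤ) : ℚ_[p])‖ ≤ (p:ℝ)⁻¹ := by
      have := (Padic.norm_int_le_pow_iff_dvd (p := p) s 1).mpr (by simpa using hdvds)
      simpa using this
    have hle : ‖((bernoulli k : ℚ) : ℚ_[p]) * (p:ℚ_[p])‖ ≤ (p:ℝ)⁻¹ := by
      have := Padic.nonarchimedean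
        (((bernoulli k : ℚ) : ℚ_[p]) * (p:ℚ_[p]) - ((s:ℤ) : ℚ_[p])) ((s:ℤ) : ℚ_[p])
      rw [sub_add_cancel] at this
      exact le_trans this (max_le hkey hsnorm)
    have hB1 : ‖((bernoulli k : ℚ) : ℚ_[p])‖ ≤ 1 := by
      rw [norm_mul, Padic.norm_p] at hle
      have h3 : ‖((bernoulli k : ℚ) : ℚ_[p])‖ * (p:ℝ)⁻¹ * p ≤ (p:ℝ)⁻¹ * p :=
        mul_le_mul_of_nonneg_right hle (by positivity)
      calc ‖((bernoulli k : ℚ) : ℚ_[p])‖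
          = ‖((bernoulli k : ℚ) : ℚ_[p])‖ * (p:ℝ)⁻¹ * p := by field_simp
        _ ≤ (p:ℝ)⁻¹ * p := h3
        _ = 1 := by field_simp
    exact padicValNat.eq_zero_of_not_dvd (den_not_dvd hB1)

/-- Von Staudt–Clausen: for positive even `k`, the denominator of `B_k` is the
product of all primes `p` with `(p-1) ∣ k`. -/
theorem von_staudt_clausen_denominator (k : ℕ) (hk : 0 < k) (hke : Even k) :
    (bernoulli k).den =
      ∏ p ∈ (Finset.range (k + 2)).filter (fun p => Nat.Prime p ∧ (p - 1) ∣ k), p := by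
  have hk2 : 2 ≤ k := by rcases hke with ⟨a, ha⟩; omega
  set s := (Finset.range (k + 2)).filter (fun p => Nat.Prime p ∧ (p - 1) ∣ k) with hsdef
  have hP0 : (∏ p ∈ s, p) ≠ 0 := by
    rw [Finset.prod_ne_zero_iff]
    intro q hq
    exact (Finset.mem_filter.mp hq).2.1.pos.ne'
  have hden0 : (bernoulli k).den ≠ 0 := (bernoulli k).den_nz
  rw [Nat.eq_iff_prime_padicValNat_eq _ _ hden0 hP0]
  intro q hq
  haveI : Fact q.Prime := ⟨hq⟩
  rw [den_val_eq hke hk2]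
  have hmem : q ∈ s ↔ (q - 1) ∣ k := by
    rw [hsdef, Finset.mem_filter, Finset.mem_range]
    constructor
    · rintro ⟨_, _, h⟩; exact h
    · intro h
      refine ⟨?_, hq, h⟩
      have h1 : q - 1 ≤ k := Nat.le_of_dvd hk h
      have h2 := hq.two_le
      omega
  have hval : padicValNat q (∏ p ∈ s, p) = if q ∈ s then 1 else 0 := by
    rw [← Nat.factorization_def _ hq]
    rw [Nat.factorization_prod (fun x hx => (Finset.mem_filter.mp hx).2.1.pos.ne')]
    rw [Finsupp.finset_sum_apply]
    have hterm : ∀ x ∈ s, (Nat.factorization x) q = if x = q then 1 else 0 := by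
      intro x hx
      rw [(Finset.mem_filter.mp hx).2.1.factorization]
      rw [Finsupp.single_apply]
    rw [Finset.sum_congr rfl hterm, Finset.sum_ite_eq' s q (fun _ => 1)]
  rw [hval]
  by_cases hd : (q-1) ∣ k
  · rw [if_pos hd, if_pos (hmem.mpr hd)]
  · rw [if_neg hd, if_neg (fun hc => hd (hmem.mp hc))]
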